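/- In the generalized Cartan matrix setting: (a) s_{β_1}s_{β_2}⋯s_{β_{j−1}}(β_j) = α_{i_j} for every j ∈ [1,n]; and (b) S(λ,β) = {θ^{(j)} : j ∈ J}, where for j ∈ J the vector θ^{(j)} ∈ ℤ^n is defined by θ^{(j)}_j = −1, θ^{(j)}_{j⁺} = −1, θ^{(j)}_k = −a_{i_k,i_j} for j < k < j⁺, and θ^{(j)}_k = 0 for all other k ∈ [1,n]. -/

import Mathlib

open Finset Matrix

noncomputable section

/-- The standard embedding of an integer vector into `ℂⁿ`. -/
def cvec {n : ℕ} (w : Fin n → ℤ) : Fin n → ℂ := fun j => (w j : ℂ)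

/-- `J_w = { j : w_j = -1 }`. -/
def Jset {n : ℕ} (w : Fin n → ℤ) : Finset (Fin n) :=
  Finset.univ.filter (fun j => w j = -1)

/-- The linear map `β : ℂⁿ → V`, `w ↦ ∑ w_j β_j`. -/
def bmap {n : ℕ} {V : Type*} [AddCommGroup V] [Module ℂ V]
    (β : Fin n → V) (w : Fin n → ℂ) : V :=
  ∑ j, w j • β j

/-- The pair `(λ, β)` is T-log-symplectic. -/
def TLogSymp {n : ℕ} {V : Type*} [AddCommGroup V] [Module ℂ V]
    (M : Matrix (Fin n) (Fin n) ℂ) (β : Fin n → V) : Prop :=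
  ∀ w : Fin n → ℂ, M.mulVec w = 0 → bmap β w = 0 → w = 0

/-- The set `W(λ, β)`. -/
def Wset {n : ℕ} {V : Type*} [AddCommGroup V] [Module ℂ V]
    (M : Matrix (Fin n) (Fin n) ℂ) (β : Fin n → V) : Set (Fin n → ℤ) :=
  {w | (∀ j, -1 ≤ w j) ∧ (∀ j, j ∉ Jset w → M.mulVec (cvec w) j = 0) ∧
    bmap β (cvec w) = 0}

/-- The set `S(λ, β)` of smoothable weights. -/
def Sset {n : ℕ} {V : Type*} [AddCommGroup V] [Module ℂ V]
    (M : Matrix (Fin n) (Fin n) ℂ) (β : Fin n → V) : Set (Fin n → ℤ) :=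
  {θ | θ ∈ Wset M β ∧ (Jset θ).card = 2}

/-- `S_m`: sums of exactly `m` elements of `S`, repetitions allowed. -/
def SumOf {n : ℕ} (S : Set (Fin n → ℤ)) (m : ℕ) : Set (Fin n → ℤ) :=
  {w | ∃ l : Multiset (Fin n → ℤ), (∀ x ∈ l, x ∈ S) ∧ Multiset.card l = m ∧ l.sum = w}

/-- `S_{≥ m}`: sums of at least `m` elements of `S`, repetitions allowed. -/
def SumGE {n : ℕ} (S : Set (Fin n → ℤ)) (m : ℕ) : Set (Fin n → ℤ) :=
  {w | ∃ m', m ≤ m' ∧ w ∈ SumOf S m'}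

/-- A vector `w ∈ ℤⁿ` is negatively bordered. -/
def NegBordered {n : ℕ} (w : Fin n → ℤ) : Prop :=
  ∃ j k : Fin n, j < k ∧ w j = -1 ∧ w k = -1 ∧ (∀ i, i < j → w i = 0) ∧
    (∀ i, k < i → w i = 0) ∧ (∀ i, j < i → i < k → 0 ≤ w i)

/-- The Cartan number `a_{b,ξ} = 2⟨b,ξ⟩/⟨b,b⟩`. -/
def cartan {V : Type*} [AddCommGroup V] [Module ℂ V]
    (B : V →ₗ[ℂ] V →ₗ[ℂ] ℂ) (b ξ : V) : ℂ :=
  2 * B b ξ / B b b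

/-- The reflection `s_b(ξ) = ξ - a_{b,ξ} b`. -/
def sRefl {V : Type*} [AddCommGroup V] [Module ℂ V]
    (B : V →ₗ[ℂ] V →ₗ[ℂ] ℂ) (b ξ : V) : V :=
  ξ - cartan B b ξ • b

/-- `reflL B g m = s_{g 0} ∘ s_{g 1} ∘ ⋯ ∘ s_{g (m-1)}`. -/
def reflL {V : Type*} [AddCommGroup V] [Module ℂ V]
    (B : V →ₗ[ℂ] V →ₗ[ℂ] ℂ) (g : ℕ → V) : ℕ → V → V
  | 0, ξ => ξ
  | m + 1, ξ => reflL B g m (sRefl B (g m) ξ)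

/-- `reflR B g m = s_{g (m-1)} ∘ ⋯ ∘ s_{g 1} ∘ s_{g 0}`. -/
def reflR {V : Type*} [AddCommGroup V] [Module ℂ V]
    (B : V →ₗ[ℂ] V →ₗ[ℂ] ℂ) (g : ℕ → V) : ℕ → V → V
  | 0, ξ => ξ
  | m + 1, ξ => sRefl B (g m) (reflR B g m ξ)

/-- Extension of a `Fin n`-indexed family to `ℕ` by zero. -/
def gext {n : ℕ} {V : Type*} [AddCommGroup V] (v : Fin n → V) : ℕ → V :=
  fun t => if h : t < n then v ⟨t, h⟩ else 0

/-- `γ_j = s_{β_1} s_{β_2} ⋯ s_{β_{j-1}} (β_j)`. -/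
def gam {n : ℕ} {V : Type*} [AddCommGroup V] [Module ℂ V]
    (B : V →ₗ[ℂ] V →ₗ[ℂ] ℂ) (β : Fin n → V) (j : Fin n) : V :=
  reflL B (gext β) j.val (β j)

/-- The Poisson coefficient matrix `λ` of a T-action datum: `λ_{jk} = -⟨β_j, β_k⟩` for
`j < k`, `⟨β_j, β_k⟩` for `j > k`, and `0` on the diagonal. -/
def lam {n : ℕ} {V : Type*} [AddCommGroup V] [Module ℂ V]
    (B : V →ₗ[ℂ] V →ₗ[ℂ] ℂ) (β : Fin n → V) : Matrix (Fin n) (Fin n) ℂ :=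
  Matrix.of fun j k =>
    if j < k then -(B (β j) (β k)) else if k < j then B (β j) (β k) else 0

/-- The upper triangular matrix `Q` with `Q_{jj} = 1` and `Q_{jk} = a_{γ_j, γ_k}` for
`j < k`. -/
def Qmat {n : ℕ} {V : Type*} [AddCommGroup V] [Module ℂ V]
    (B : V →ₗ[ℂ] V →ₗ[ℂ] ℂ) (γ : Fin n → V) : Matrix (Fin n) (Fin n) ℂ :=
  Matrix.of fun j k => if j = k then 1 else if j < k then cartan B (γ j) (γ k) else 0

open scoped Classical in
/-- The set `{k ∈ [j+1, n] : γ_k = γ_j}`, whose minimum (when it exists) is `j⁺`. -/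
def plusSet {n : ℕ} {V : Type*} (γ : Fin n → V) (j : Fin n) : Finset (Fin n) :=
  Finset.univ.filter (fun k => j < k ∧ γ k = γ j)

/-- `e_{j⁺} ∈ ℂⁿ`, with the convention `e_{+∞} = 0`. -/
def eplus {n : ℕ} {V : Type*} (γ : Fin n → V) (j : Fin n) : Fin n → ℂ :=
  if h : (plusSet γ j).Nonempty then Pi.single ((plusSet γ j).min' h) 1 else 0

/-- `θ^{(j)} = Q (e_j - e_{j⁺}) ∈ ℂⁿ`. -/
def thetaC {n : ℕ} {V : Type*} [AddCommGroup V] [Module ℂ V]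
    (B : V →ₗ[ℂ] V →ₗ[ℂ] ℂ) (β : Fin n → V) (j : Fin n) : Fin n → ℂ :=
  (Qmat B (gam B β)).mulVec ((Pi.single j 1 : Fin n → ℂ) - eplus (gam B β) j)

/-- The linear map `β : ℂⁿ → V`, `w ↦ ∑ w_j β_j`, as a bundled linear map. -/
def betaLin {n : ℕ} {V : Type*} [AddCommGroup V] [Module ℂ V]
    (β : Fin n → V) : (Fin n → ℂ) →ₗ[ℂ] V where
  toFun w := ∑ j, w j • β j
  map_add' x y := by simp [add_smul, Finset.sum_add_distrib]
  map_smul' a x := by simp [Finset.smul_sum, smul_smul]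

section Aux

variable {V : Type*} [AddCommGroup V] [Module ℂ V] (B : V →ₗ[ℂ] V →ₗ[ℂ] ℂ)

structure IsGoodMap (f : V → V) : Prop where
  madd : ∀ x y, f (x + y) = f x + f y
  msmul : ∀ (c : ℂ) (x : V), f (c • x) = c • f x
  mB : ∀ x y, B (f x) (f y) = B x y

lemma IsGoodMap.mzero {B : V →ₗ[ℂ] V →ₗ[ℂ] ℂ} {f : V → V} (hf : IsGoodMap B f) :
    f 0 = 0 := by
  have := hf.msmul 0 0; simpa using this

lemma IsGoodMap.msub {B : V →ₗ[ℂ] V →ₗ[ℂ] ℂ} {f : V → V} (hf : IsGoodMap B f)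
    (x y : V) : f (x - y) = f x - f y := by
  have h1 : f (x - y) + f y = f x := by
    rw [← hf.madd]; congr 1; abel
  linear_combination (norm := abel) h1

lemma isGood_id : IsGoodMap B (fun x => x) := ⟨fun _ _ => rfl, fun _ _ => rfl, fun _ _ => rfl⟩

lemma isGood_comp {f g : V → V} (hf : IsGoodMap B f) (hg : IsGoodMap B g) :
    IsGoodMap B (fun x => f (g x)) :=
  ⟨fun x y => by rw [hg.madd, hf.madd], fun c x => by rw [hg.msmul, hf.msmul],
   fun x y => by rw [hf.mB, hg.mB]⟩

lemma cartan_zero (b : V) : cartan B b 0 = 0 := by simp [cartan]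

lemma sRefl_zero (b : V) : sRefl B b 0 = 0 := by simp [sRefl, cartan_zero]

lemma cartan_add (b x y : V) : cartan B b (x + y) = cartan B b x + cartan B b y := by
  simp only [cartan, map_add]; ring

lemma cartan_smul (b : V) (c : ℂ) (x : V) : cartan B b (c • x) = c * cartan B b x := by
  simp only [cartan, LinearMap.map_smul, smul_eq_mul]; ring

lemma isGood_sRefl (hBsymm : ∀ x y, B x y = B y x) (b : V) : IsGoodMap B (sRefl B b) := by
  constructor
  · intro x y
    simp only [sRefl, cartan_add, add_smul]
    abel
  · intro c x
    simp only [sRefl, cartan_smul, mul_smul, smul_sub]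
  · intro x y
    by_cases hc : B b b = 0
    · simp [sRefl, cartan, hc]
    · simp only [sRefl, cartan, map_sub, LinearMap.map_smul, smul_eq_mul,
        LinearMap.sub_apply, LinearMap.smul_apply]
      field_simp
      rw [hBsymm x b]
      ring

lemma sRefl_sRefl (b x : V) : sRefl B b (sRefl B b x) = x := by
  by_cases hc : B b b = 0
  · simp [sRefl, cartan, hc]
  · have h1 : cartan B b (sRefl B b x) = - cartan B b x := by
      simp only [sRefl, cartan, map_sub, LinearMap.map_smul, smul_eq_mul]
      field_simp
      ring
    rw [sRefl, h1, sRefl]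
    module

lemma sRefl_self (b : V) (hc : B b b ≠ 0) : sRefl B b b = -b := by
  have : cartan B b b = 2 := by
    simp only [cartan]; field_simp
  rw [sRefl, this]
  module

lemma sRefl_conj {f : V → V} (hf : IsGoodMap B f) (b x : V) :
    f (sRefl B b x) = sRefl B (f b) (f x) := by
  rw [sRefl, hf.msub, hf.msmul, sRefl]
  congr 2
  simp [cartan, hf.mB]

lemma isGood_reflL (hBsymm : ∀ x y, B x y = B y x) (g : ℕ → V) :
    ∀ m, IsGoodMap B (reflL B g m)
  | 0 => isGood_id B
  | m + 1 => by
    have := isGood_comp B (isGood_reflL hBsymm g m) (isGood_sRefl B hBsymm (g m))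
    exact this

lemma isGood_reflR (hBsymm : ∀ x y, B x y = B y x) (g : ℕ → V) :
    ∀ m, IsGoodMap B (reflR B g m)
  | 0 => isGood_id B
  | m + 1 => by
    have := isGood_comp B (isGood_sRefl B hBsymm (g m)) (isGood_reflR hBsymm g m)
    exact this

lemma reflR_reflL (g : ℕ → V) : ∀ m x, reflR B g m (reflL B g m x) = x
  | 0, x => rfl
  | m + 1, x => by
    show sRefl B (g m) (reflR B g m (reflL B g m (sRefl B (g m) x))) = x
    rw [reflR_reflL g m, sRefl_sRefl]

lemma reflL_reflR (g : ℕ → V) : ∀ m x, reflL B g m (reflR B g m x) = x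
  | 0, x => rfl
  | m + 1, x => by
    show reflL B g m (sRefl B (g m) (sRefl B (g m) (reflR B g m x))) = x
    rw [sRefl_sRefl, reflL_reflR g m]

end Aux

theorem stmt7 (r n : ℕ) (hr : 0 < r) (hn : 0 < n)
    (A : Matrix (Fin r) (Fin r) ℤ) (hA2 : ∀ i, A i i = 2)
    (hAneg : ∀ i j, i ≠ j → A i j ≤ 0)
    (d : Fin r → ℤ) (hd : ∀ i, 0 < d i)
    (hdsym : ∀ i j, d i * A i j = d j * A j i)
    {V : Type*} [AddCommGroup V] [Module ℂ V]
    (B : V →ₗ[ℂ] V →ₗ[ℂ] ℂ) (hBsymm : ∀ x y, B x y = B y x)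
    (α : Fin r → V) (hα : LinearIndependent ℂ α)
    (hBα : ∀ i j, B (α i) (α j) = ((d i * A i j : ℤ) : ℂ))
    (iseq : Fin n → Fin r) (β : Fin n → V)
    (hβ : ∀ j : Fin n,
      β j = reflL B (gext (fun t : Fin n => α (iseq t))) j.val (α (iseq j))) :
    (∀ j : Fin n, gam B β j = α (iseq j)) ∧
    Sset (lam B β) β = {θ : Fin n → ℤ | ∃ j jp : Fin n, j < jp ∧ iseq jp = iseq j ∧
      (∀ k, j < k → k < jp → iseq k ≠ iseq j) ∧
      θ = fun k => if k = j ∨ k = jp then -1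
        else if j < k ∧ k < jp then -(A (iseq k) (iseq j)) else 0} := by
  -- basic facts
  classical
  set gα : ℕ → V := gext (fun t : Fin n => α (iseq t)) with hgadef
  have hgα : ∀ (m : ℕ) (h : m < n), gα m = α (iseq ⟨m, h⟩) := by
    intro m h; simp [hgadef, gext, h]
  have hβ' : ∀ j : Fin n, β j = reflL B gα j.val (α (iseq j)) := hβ
  have hd0 : ∀ p : Fin r, ((d p : ℂ)) ≠ 0 := by
    intro p
    exact_mod_cast (hd p).ne'
  have hBαα : ∀ p : Fin r, B (α p) (α p) = 2 * (d p : ℂ) := by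
    intro p
    rw [hBα p p, hA2 p]; push_cast; ring
  have hcartanα : ∀ p q : Fin r, cartan B (α p) (α q) = ((A p q : ℤ) : ℂ) := by
    intro p q
    rw [cartan, hBα p q, hBαα p, div_eq_iff (mul_ne_zero two_ne_zero (hd0 p))]
    push_cast
    ring
  have hWgood : ∀ m, IsGoodMap B (reflL B gα m) := isGood_reflL B hBsymm gα
  -- key lemma : reflL for β equals reflR for α
  have hkey : ∀ m, m ≤ n → ∀ ξ, reflL B (gext β) m ξ = reflR B gα m ξ := by
    intro m
    induction m with
    | zero => intro _ ξ; rfl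
    | succ m ih =>
      intro hm ξ
      have hmn : m < n := hm
      have h1 : reflL B (gext β) (m+1) ξ = reflL B (gext β) m (sRefl B (β ⟨m, hmn⟩) ξ) := by
        show reflL B (gext β) m (sRefl B (gext β m) ξ) = _
        congr 2
        simp [gext, hmn]
      rw [h1, ih (le_of_lt hmn)]
      show reflR B gα m (sRefl B (β ⟨m,hmn⟩) ξ) = sRefl B (gα m) (reflR B gα m ξ)
      rw [sRefl_conj B (isGood_reflR B hBsymm gα m)]
      congr 1
      rw [hβ' ⟨m,hmn⟩]
      show reflR B gα m (reflL B gα m _) = _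
      rw [reflR_reflL, hgα m hmn]
  have ha : ∀ j : Fin n, gam B β j = α (iseq j) := by
    intro j
    rw [gam]
    have : gext β = gext β := rfl
    rw [hkey j.val (le_of_lt j.isLt), hβ' j]
    show reflR B gα j.val (reflL B gα j.val _) = _
    rw [reflR_reflL]
  refine ⟨ha, ?_⟩
  -- part (b)
  have hββ : ∀ j : Fin n, B (β j) (β j) = 2 * (d (iseq j) : ℂ) := by
    intro j
    rw [hβ' j, (hWgood j.val).mB, hBαα]
  have hββ0 : ∀ j : Fin n, B (β j) (β j) ≠ 0 := by
    intro j; rw [hββ j]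
    exact mul_ne_zero two_ne_zero (hd0 _)
  have hβne : ∀ j : Fin n, β j ≠ 0 := by
    intro j h
    exact hββ0 j (by rw [h]; simp)
  have hcartβ : ∀ (j : Fin n) (p : Fin r),
      cartan B (β j) (reflL B gα j.val (α p)) = ((A (iseq j) p : ℤ) : ℂ) := by
    intro j p
    have h1 : cartan B (β j) (reflL B gα j.val (α p))
        = cartan B (α (iseq j)) (α p) := by
      rw [hβ' j]
      simp only [cartan, (hWgood j.val).mB]
    rw [h1, hcartanα]
  have hstep : ∀ (j : Fin n) (p : Fin r),
      sRefl B (β j) (reflL B gα j.val (α p)) = reflL B gα (j.val + 1) (α p) := by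
    intro j p
    rw [hβ' j, ← sRefl_conj B (hWgood j.val)]
    show _ = reflL B gα j.val (sRefl B (gα j.val) (α p))
    rw [hgα j.val j.isLt]
  -- partial sums
  set F : (Fin n → ℂ) → ℕ → V :=
    fun w m => ∑ k ∈ Finset.univ.filter (fun k : Fin n => (k : ℕ) < m), w k • β k with hFdef
  have hF0 : ∀ w, F w 0 = 0 := by
    intro w; simp [hFdef]
  have hFsucc : ∀ (w : Fin n → ℂ) (m : ℕ) (h : m < n),
      F w (m + 1) = F w m + w ⟨m, h⟩ • β ⟨m, h⟩ := by
    intro w m h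
    have hset : Finset.univ.filter (fun k : Fin n => (k : ℕ) < m + 1)
        = insert (⟨m, h⟩ : Fin n) (Finset.univ.filter (fun k : Fin n => (k : ℕ) < m)) := by
      ext k
      simp only [Finset.mem_filter, Finset.mem_univ, true_and, Finset.mem_insert]
      constructor
      · intro hk
        rcases Nat.lt_succ_iff_lt_or_eq.mp hk with h1 | h1
        · exact Or.inr h1
        · exact Or.inl (Fin.ext h1)
      · rintro (rfl | hk)
        · exact Nat.lt_succ_self m
        · exact Nat.lt_succ_of_lt hk
    simp only [hFdef]
    rw [hset, Finset.sum_insert (by simp)]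
    abel
  have hFn : ∀ w, F w n = bmap β w := by
    intro w
    simp only [hFdef, bmap]
    congr 1
    exact Finset.filter_true_of_mem (fun k _ => k.isLt)
  have hBF : ∀ (w : Fin n → ℂ) (m : Fin n), B (β m) (F w m.val)
      = ∑ k ∈ Finset.univ.filter (fun k : Fin n => (k : ℕ) < (m : ℕ)), w k * B (β m) (β k) := by
    intro w m
    simp only [hFdef, map_sum, LinearMap.map_smul, smul_eq_mul]
  have hlam : ∀ (w : Fin n → ℂ), bmap β w = 0 → ∀ m : Fin n,
      (lam B β).mulVec w m = w m * B (β m) (β m) + 2 * B (β m) (F w m.val) := by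
    intro w hb m
    have hb' : ∑ k, w k * B (β m) (β k) = 0 := by
      have h := congrArg (B (β m)) hb
      simpa [bmap, map_sum, LinearMap.map_smul, smul_eq_mul] using h
    have h0 : ∑ k, B (β m) (β k) * w k = 0 := by
      rw [← hb']; exact Finset.sum_congr rfl (fun k _ => by ring)
    have h1 : (lam B β).mulVec w m
        = ∑ k, (lam B β m k * w k + B (β m) (β k) * w k) := by
      simp only [Matrix.mulVec, dotProduct]
      rw [Finset.sum_add_distrib, h0, add_zero]
    have h2 : ∀ k : Fin n, lam B β m k * w k + B (β m) (β k) * w k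
        = (if (k : ℕ) < (m : ℕ) then 2 * (w k * B (β m) (β k)) else 0)
          + (if k = m then w m * B (β m) (β m) else 0) := by
      intro k
      rcases lt_trichotomy ((k : ℕ)) ((m : ℕ)) with h | h | h
      · have hmk : ¬ (m < k) := by rw [Fin.lt_def]; omega
        have hkm : k < m := by rw [Fin.lt_def]; exact h
        have hne : ¬ (k = m) := by intro he; subst he; omega
        simp only [lam, Matrix.of_apply, if_neg hmk, if_pos hkm, if_pos h, if_neg hne]
        ring
      · have he : k = m := Fin.ext h
        subst he
        simp [lam]
        ring
      · have hmk : m < k := by rw [Fin.lt_def]; exact h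
        have hkm : ¬ ((k : ℕ) < (m : ℕ)) := by omega
        have hne : ¬ (k = m) := by intro he; subst he; omega
        simp only [lam, Matrix.of_apply, if_pos hmk, if_neg hkm, if_neg hne]
        ring
    rw [h1, Finset.sum_congr rfl (fun k _ => h2 k), Finset.sum_add_distrib,
      Finset.sum_ite_eq' Finset.univ m, if_pos (Finset.mem_univ m), ← Finset.sum_filter,
      hBF w m, Finset.mul_sum]
    ring
  have hsolve : ∀ a b c : ℂ, c ≠ 0 → (a * c + 2 * b = 0 ↔ a = -(2 * b / c)) := by
    intro a b c hc
    constructor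
    · intro h; field_simp; linear_combination h
    · intro h; rw [h]; field_simp; ring
  have hstepiff : ∀ (w : Fin n → ℂ), bmap β w = 0 → ∀ m : Fin n,
      ((lam B β).mulVec w m = 0 ↔ F w ((m : ℕ) + 1) = sRefl B (β m) (F w (m : ℕ))) := by
    intro w hb m
    rw [hlam w hb m]
    have hFm : (⟨(m : ℕ), m.isLt⟩ : Fin n) = m := rfl
    rw [hFsucc w m.val m.isLt, hFm]
    rw [hsolve (w m) (B (β m) (F w (m : ℕ))) (B (β m) (β m)) (hββ0 m)]
    constructor
    · intro h
      rw [h, sRefl, cartan]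
      module
    · intro h
      rw [sRefl, cartan] at h
      have h2 : (w m + 2 * B (β m) (F w (m : ℕ)) / B (β m) (β m)) • β m = 0 := by
        have h3 : F w (m : ℕ) + w m • β m
            - (F w (m : ℕ) - (2 * B (β m) (F w (m : ℕ)) / B (β m) (β m)) • β m) = 0 := by
          rw [h]; abel
        rw [← h3]; module
      rcases smul_eq_zero.mp h2 with h4 | h4
      · linear_combination h4
      · exact absurd h4 (hβne m)
  have hcancel : ∀ (c c' : ℂ) (k : Fin n), c • β k = c' • β k → c = c' := by
    intro c c' k h
    have h2 : (c - c') • β k = 0 := by rw [sub_smul, h, sub_self]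
    rcases smul_eq_zero.mp h2 with h3 | h3
    · linear_combination h3
    · exact absurd h3 (hβne k)
  have hWinj : ∀ (m : ℕ) (x y : V), reflL B gα m x = reflL B gα m y → x = y := by
    intro m x y h
    have := congrArg (reflR B gα m) h
    rwa [reflR_reflL, reflR_reflL] at this
  ext θ
  simp only [Set.mem_setOf_eq]
  constructor
  · -- reverse inclusion: Sset ⊆ explicit set
    rintro ⟨⟨hw1, hw2, hw3⟩, hcard⟩
    obtain ⟨a, b, hab, hJ⟩ := Finset.card_eq_two.mp hcard
    obtain ⟨j, jp, hjlt, hJ2⟩ : ∃ j jp : Fin n, j < jp ∧ Jset θ = {j, jp} := by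
      rcases lt_or_gt_of_ne hab with h | h
      · exact ⟨a, b, h, hJ⟩
      · exact ⟨b, a, h, by rw [hJ]; exact Finset.pair_comm a b⟩
    have hjlt' : (j : ℕ) < (jp : ℕ) := hjlt
    have hmemJ : ∀ k : Fin n, θ k = -1 ↔ (k = j ∨ k = jp) := by
      intro k
      have : k ∈ Jset θ ↔ θ k = -1 := by simp [Jset]
      rw [← this, hJ2]
      simp
    set w : Fin n → ℂ := cvec θ with hwdef
    have hwv : ∀ k : Fin n, w k = ((θ k : ℤ) : ℂ) := fun k => rfl
    have hgood : ∀ m : Fin n, m ≠ j → m ≠ jp →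
        F w ((m : ℕ) + 1) = sRefl B (β m) (F w (m : ℕ)) := by
      intro m h1 h2
      refine (hstepiff w hw3 m).mp (hw2 m ?_)
      rw [hJ2]
      simp [h1, h2]
    have hzero1 : ∀ m : ℕ, m ≤ (j : ℕ) → F w m = 0 := by
      intro m
      induction m with
      | zero => intro _; exact hF0 w
      | succ m ih =>
        intro hm
        have hmn : m < n := by have := j.isLt; omega
        have h1 : (⟨m, hmn⟩ : Fin n) ≠ j := by
          intro he; have := congrArg Fin.val he; simp at this; omega
        have h2 : (⟨m, hmn⟩ : Fin n) ≠ jp := by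
          intro he; have := congrArg Fin.val he; simp at this; omega
        have := hgood ⟨m, hmn⟩ h1 h2
        simp only at this
        rw [this, ih (by omega), sRefl_zero]
    have hθlow : ∀ k : Fin n, (k : ℕ) < (j : ℕ) → θ k = 0 := by
      intro k hk
      have e1 : F w ((k : ℕ) + 1) = F w (k : ℕ) + w k • β k := hFsucc w k.val k.isLt
      rw [hzero1 _ (by omega), hzero1 _ (by omega)] at e1
      have e2 : w k • β k = 0 := by
        have := e1.symm; rwa [zero_add] at this
      rcases smul_eq_zero.mp e2 with h3 | h3
      · rw [hwv k] at h3; exact_mod_cast h3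
      · exact absurd h3 (hβne k)
    have hθj : θ j = -1 := (hmemJ j).mpr (Or.inl rfl)
    have hθjp : θ jp = -1 := (hmemJ jp).mpr (Or.inr rfl)
    have hmid : ∀ m : ℕ, (j : ℕ) < m → m ≤ (jp : ℕ) → F w m = reflL B gα m (α (iseq j)) := by
      intro m
      induction m with
      | zero => omega
      | succ m ih =>
        intro h1 h2
        have hmn : m < n := by have := jp.isLt; omega
        rcases Nat.lt_or_ge ((j : ℕ)) m with hc | hc
        · have hne1 : (⟨m, hmn⟩ : Fin n) ≠ j := by
            intro he; have := congrArg Fin.val he; simp at this; omega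
          have hne2 : (⟨m, hmn⟩ : Fin n) ≠ jp := by
            intro he; have := congrArg Fin.val he; simp at this; omega
          have hg := hgood ⟨m, hmn⟩ hne1 hne2
          simp only at hg
          rw [hg, ih hc (by omega)]
          exact hstep ⟨m, hmn⟩ (iseq j)
        · have hmj : m = (j : ℕ) := by omega
          subst hmj
          have hfm : (⟨(j : ℕ), hmn⟩ : Fin n) = j := rfl
          rw [hFsucc w (j : ℕ) hmn, hzero1 (j : ℕ) le_rfl, hfm]
          have hwj : w j = -1 := by rw [hwv j, hθj]; norm_num
          have hr : reflL B gα ((j : ℕ) + 1) (α (iseq j)) = sRefl B (β j) (reflL B gα (j : ℕ) (α (iseq j))) :=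
            (hstep j (iseq j)).symm
          rw [hr, ← hβ' j, sRefl_self B (β j) (hββ0 j), hwj]
          module
    have hdown : ∀ t m : ℕ, m + t = n → (jp : ℕ) < m → F w m = 0 := by
      intro t
      induction t with
      | zero =>
        intro m hm _
        have : m = n := by omega
        subst this
        rw [hFn w]; exact hw3
      | succ t ih =>
        intro m hm hjpm
        have hmn : m < n := by omega
        have hne1 : (⟨m, hmn⟩ : Fin n) ≠ j := by
          intro he; have := congrArg Fin.val he; simp at this; omega
        have hne2 : (⟨m, hmn⟩ : Fin n) ≠ jp := by
          intro he; have := congrArg Fin.val he; simp at this; omega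
        have hg := hgood ⟨m, hmn⟩ hne1 hne2
        simp only at hg
        have h1 : F w (m + 1) = 0 := ih (m + 1) (by omega) (by omega)
        have h2 := congrArg (sRefl B (β ⟨m, hmn⟩)) hg
        rw [sRefl_sRefl] at h2
        rw [← h2, h1, sRefl_zero]
    have hzero2 : ∀ m : ℕ, (jp : ℕ) < m → m ≤ n → F w m = 0 := by
      intro m h1 h2
      exact hdown (n - m) m (by omega) h1
    have hiseq : iseq jp = iseq j := by
      have e1 : F w ((jp : ℕ) + 1) = F w (jp : ℕ) + w jp • β jp := hFsucc w jp.val jp.isLt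
      rw [hzero2 _ (by omega) jp.isLt, hmid (jp : ℕ) hjlt' le_rfl] at e1
      have hwjp : w jp = -1 := by rw [hwv jp, hθjp]; norm_num
      rw [hwjp] at e1
      have e2 : reflL B gα (jp : ℕ) (α (iseq j)) = reflL B gα (jp : ℕ) (α (iseq jp)) := by
        rw [← hβ' jp]
        have : β jp = reflL B gα (jp : ℕ) (α (iseq j)) + (-1 : ℂ) • β jp + β jp := by
          rw [← e1]; module
        rw [this]; module
      exact (hα.injective (hWinj (jp : ℕ) _ _ e2)).symm
    have hθhigh : ∀ k : Fin n, (jp : ℕ) < (k : ℕ) → θ k = 0 := by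
      intro k hk
      have e1 : F w ((k : ℕ) + 1) = F w (k : ℕ) + w k • β k := hFsucc w k.val k.isLt
      rw [hzero2 _ (by omega) (le_of_lt k.isLt), hzero2 _ (by omega) k.isLt] at e1
      have e2 : w k • β k = 0 := by
        have := e1.symm; rwa [zero_add] at this
      rcases smul_eq_zero.mp e2 with h3 | h3
      · rw [hwv k] at h3; exact_mod_cast h3
      · exact absurd h3 (hβne k)
    have hθmid : ∀ k : Fin n, (j : ℕ) < (k : ℕ) → (k : ℕ) < (jp : ℕ) →
        θ k = -(A (iseq k) (iseq j)) := by
      intro k h1 h2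
      have hne1 : k ≠ j := by intro he; subst he; omega
      have hne2 : k ≠ jp := by intro he; subst he; omega
      have hg := hgood k hne1 hne2
      have e1 : F w ((k : ℕ) + 1) = F w (k : ℕ) + w k • β k := hFsucc w k.val k.isLt
      rw [e1, sRefl] at hg
      have e2 : w k • β k = (- cartan B (β k) (F w (k : ℕ))) • β k := by
        rw [neg_smul]
        have : w k • β k = F w (k : ℕ) - cartan B (β k) (F w (k : ℕ)) • β k - F w (k : ℕ) := by
          rw [← hg]; abel
        rw [this]; abel
      have e3 : w k = - cartan B (β k) (F w (k : ℕ)) := hcancel _ _ k e2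
      rw [hmid (k : ℕ) h1 (by omega), hcartβ k (iseq j)] at e3
      have : ((θ k : ℤ) : ℂ) = ((-(A (iseq k) (iseq j)) : ℤ) : ℂ) := by
        rw [← hwv k, e3]; push_cast; ring
      exact_mod_cast this
    have hnemid : ∀ k : Fin n, j < k → k < jp → iseq k ≠ iseq j := by
      intro k h1 h2 he
      have := hθmid k h1 h2
      rw [he, hA2] at this
      have := hw1 k
      omega
    refine ⟨j, jp, hjlt, hiseq, hnemid, ?_⟩
    funext k
    by_cases hk1 : k = j ∨ k = jp
    · rw [if_pos hk1]
      exact (hmemJ k).mpr hk1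
    · rw [if_neg hk1]
      by_cases hk2 : j < k ∧ k < jp
      · rw [if_pos hk2]
        exact hθmid k hk2.1 hk2.2
      · rw [if_neg hk2]
        push_neg at hk1
        have hv1 : (k : ℕ) ≠ (j : ℕ) := fun h => hk1.1 (Fin.ext h)
        have hv2 : (k : ℕ) ≠ (jp : ℕ) := fun h => hk1.2 (Fin.ext h)
        have : ¬((j : ℕ) < (k : ℕ) ∧ (k : ℕ) < (jp : ℕ)) := by
          intro h; exact hk2 ⟨h.1, h.2⟩
        rcases Nat.lt_or_ge ((k : ℕ)) ((j : ℕ)) with h | h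
        · exact hθlow k h
        · have : (jp : ℕ) < (k : ℕ) := by
            rcases Nat.lt_or_ge ((k : ℕ)) ((jp : ℕ)) with h5 | h5
            · exfalso; exact hk2 ⟨by omega, h5⟩
            · omega
          exact hθhigh k this
  · rintro ⟨j, jp, hjlt, heq, hne, hθe⟩
    have hjlt' : (j : ℕ) < (jp : ℕ) := hjlt
    have hθj : θ j = -1 := by simp [hθe]
    have hθjp : θ jp = -1 := by simp [hθe]
    have hθmid : ∀ k : Fin n, j < k → k < jp → θ k = -(A (iseq k) (iseq j)) := by
      intro k h1 h2
      have hk1 : ¬(k = j ∨ k = jp) := by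
        rintro (rfl | rfl)
        · exact absurd h1 (lt_irrefl _)
        · exact absurd h2 (lt_irrefl _)
      simp only [hθe]
      rw [if_neg hk1, if_pos (show j < k ∧ k < jp from ⟨h1, h2⟩)]
    have hθout : ∀ k : Fin n, ¬(k = j ∨ k = jp) → ¬(j < k ∧ k < jp) → θ k = 0 := by
      intro k h1 h2
      simp only [hθe]
      rw [if_neg h1, if_neg h2]
    have hmidpos : ∀ k : Fin n, j < k → k < jp → 0 ≤ θ k := by
      intro k h1 h2
      rw [hθmid k h1 h2]
      have := hAneg (iseq k) (iseq j) (hne k h1 h2)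
      omega
    set w : Fin n → ℂ := cvec θ with hwdef
    have hwv : ∀ k : Fin n, w k = ((θ k : ℤ) : ℂ) := fun k => rfl
    have hJ2 : Jset θ = {j, jp} := by
      ext k
      simp only [Jset, Finset.mem_filter, Finset.mem_univ, true_and, Finset.mem_insert,
        Finset.mem_singleton]
      constructor
      · intro hk
        by_contra hk1
        push_neg at hk1
        have hk1' : ¬(k = j ∨ k = jp) := by rintro (h | h); exacts [hk1.1 h, hk1.2 h]
        by_cases hk2 : j < k ∧ k < jp
        · have := hmidpos k hk2.1 hk2.2; omega
        · have := hθout k hk1' hk2; omega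
      · rintro (rfl | rfl)
        exacts [hθj, hθjp]
    have hjne : j ≠ jp := ne_of_lt hjlt
    have hcard : (Jset θ).card = 2 := by rw [hJ2]; exact Finset.card_pair hjne
    -- values of F
    have hlowF : ∀ m : ℕ, m ≤ (j : ℕ) → F w m = 0 := by
      intro m
      induction m with
      | zero => intro _; exact hF0 w
      | succ m ih =>
        intro hm
        have hmn : m < n := by have := j.isLt; omega
        have hθm : θ ⟨m, hmn⟩ = 0 := by
          refine hθout _ ?_ ?_
          · rintro (he | he) <;>
            · have := congrArg Fin.val he; simp at this; omega
          · rintro ⟨h1, h2⟩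
            have : (j : ℕ) < m := h1
            omega
        rw [hFsucc w m hmn, ih (by omega), hwv, hθm]
        simp
    have hmidF : ∀ m : ℕ, (j : ℕ) < m → m ≤ (jp : ℕ) →
        F w m = reflL B gα m (α (iseq j)) := by
      intro m
      induction m with
      | zero => omega
      | succ m ih =>
        intro h1 h2
        have hmn : m < n := by have := jp.isLt; omega
        rcases Nat.lt_or_ge ((j : ℕ)) m with hc | hc
        · have hth := hθmid ⟨m, hmn⟩ (by simp only [Fin.lt_def]; omega) (by simp only [Fin.lt_def]; omega)
          rw [hFsucc w m hmn, ih hc (by omega), hwv, hth]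
          rw [← hstep ⟨m, hmn⟩ (iseq j), sRefl, hcartβ ⟨m, hmn⟩ (iseq j)]
          push_cast
          module
        · have hmj : m = (j : ℕ) := by omega
          subst hmj
          have hfm : (⟨(j : ℕ), hmn⟩ : Fin n) = j := rfl
          rw [hFsucc w (j : ℕ) hmn, hlowF (j : ℕ) le_rfl, hfm, hwv, hθj]
          rw [← hstep j (iseq j), ← hβ' j, sRefl_self B (β j) (hββ0 j)]
          push_cast
          module
    have hjpF : F w ((jp : ℕ) + 1) = 0 := by
      rw [hFsucc w (jp : ℕ) jp.isLt, hmidF (jp : ℕ) hjlt' le_rfl]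
      have hfm : (⟨(jp : ℕ), jp.isLt⟩ : Fin n) = jp := rfl
      rw [hfm, hwv, hθjp, ← heq, ← hβ' jp]
      push_cast
      module
    have hhighF : ∀ m : ℕ, (jp : ℕ) < m → m ≤ n → F w m = 0 := by
      intro m
      induction m with
      | zero => omega
      | succ m ih =>
        intro h1 h2
        rcases Nat.lt_or_ge ((jp : ℕ)) m with hc | hc
        · have hmn : m < n := by omega
          have hθm : θ ⟨m, hmn⟩ = 0 := by
            refine hθout _ ?_ ?_
            · rintro (he | he) <;>
              · have := congrArg Fin.val he; simp at this; omega
            · rintro ⟨h3, h4⟩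
              have : m < (jp : ℕ) := h4
              omega
          rw [hFsucc w m hmn, ih hc (by omega), hwv, hθm]
          simp
        · have : m = (jp : ℕ) := by omega
          subst this
          exact hjpF
    have hbw : bmap β w = 0 := by
      rw [← hFn w]
      exact hhighF n (by have := jp.isLt; omega) le_rfl
    refine ⟨⟨?_, ?_, hbw⟩, hcard⟩
    · intro k
      by_cases hk1 : k = j ∨ k = jp
      · simp only [hθe]
        rw [if_pos hk1]
      · by_cases hk2 : j < k ∧ k < jp
        · have := hmidpos k hk2.1 hk2.2; omega
        · have := hθout k hk1 hk2; omega
    · intro m hm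
      have hm1 : m ≠ j := by rintro rfl; exact hm (by rw [hJ2]; simp)
      have hm2 : m ≠ jp := by rintro rfl; exact hm (by rw [hJ2]; simp)
      refine (hstepiff w hbw m).mpr ?_
      have hv1 : (m : ℕ) ≠ (j : ℕ) := fun h => hm1 (Fin.ext h)
      have hv2 : (m : ℕ) ≠ (jp : ℕ) := fun h => hm2 (Fin.ext h)
      rcases Nat.lt_or_ge ((m : ℕ)) ((j : ℕ)) with h | h
      · rw [hlowF ((m : ℕ) + 1) (by omega), hlowF (m : ℕ) (by omega), sRefl_zero]
      · rcases Nat.lt_or_ge ((m : ℕ)) ((jp : ℕ)) with h3 | h3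
        · have hjm : (j : ℕ) < (m : ℕ) := by omega
          rw [hmidF ((m : ℕ) + 1) (by omega) (by omega), hmidF (m : ℕ) hjm (by omega)]
          exact (hstep m (iseq j)).symm
        · have hjpm : (jp : ℕ) < (m : ℕ) := by omega
          rw [hhighF ((m : ℕ) + 1) (by omega) m.isLt, hhighF (m : ℕ) (by omega) (le_of_lt m.isLt),
            sRefl_zero]
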